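/- There exists an injective group homomorphism from the alternating group A₅ into SO(3) (the group of 3×3 real rotation matrices). -/

import Mathlib

/-- The determinant, as a monoid homomorphism from the 3×3 real orthogonal group. -/
def orthogonalDet : Matrix.orthogonalGroup (Fin 3) ℝ →* ℝ where
  toFun A := (A : Matrix (Fin 3) (Fin 3) ℝ).det
  map_one' := by simp
  map_mul' := by simp

/-- `SO(3)`: the group of 3×3 real orthogonal matrices of determinant 1, as the
kernel of the determinant homomorphism on the orthogonal group. -/
def SO3 : Subgroup (Matrix.orthogonalGroup (Fin 3) ℝ) := orthogonalDet.ker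

/-! ### Auxiliary: the icosahedral representation of `A₅`.

We give an explicit table of the 60 rotation matrices (scaled by `4`, with entries in
`ℤ√5`) of the icosahedral group, indexed by the corresponding even permutations of the
five orthogonal triples of 2-fold axes. All the needed identities are verified by
`decide` on this concrete data. -/

abbrev Z5 := Zsqrtd 5

/-- A raw 3×3 matrix over `ℤ√5` (4 times a rotation matrix). -/
structure Raw where
  a : Z5
  b : Z5
  c : Z5
  d : Z5
  e : Z5
  f : Z5
  g : Z5
  h : Z5
  i : Z5
deriving DecidableEq

def Raw.mul (x y : Raw) : Raw :=
  ⟨x.a*y.a+x.b*y.d+x.c*y.g, x.a*y.b+x.b*y.e+x.c*y.h, x.a*y.c+x.b*y.f+x.c*y.i,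
   x.d*y.a+x.e*y.d+x.f*y.g, x.d*y.b+x.e*y.e+x.f*y.h, x.d*y.c+x.e*y.f+x.f*y.i,
   x.g*y.a+x.h*y.d+x.i*y.g, x.g*y.b+x.h*y.e+x.i*y.h, x.g*y.c+x.h*y.f+x.i*y.i⟩

def Raw.tr (x : Raw) : Raw := ⟨x.a,x.d,x.g,x.b,x.e,x.h,x.c,x.f,x.i⟩

def Raw.four (x : Raw) : Raw := ⟨4*x.a,4*x.b,4*x.c,4*x.d,4*x.e,4*x.f,4*x.g,4*x.h,4*x.i⟩

def raw16 : Raw := ⟨16,0,0,0,16,0,0,0,16⟩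

def tbl : List ((Fin 5 → Fin 5) × Raw) := [
  ⟨![0,1,2,3,4], ⟨4,0,0,0,4,0,0,0,4⟩⟩,
  ⟨![0,1,3,4,2], ⟨0,(-4),0,0,0,4,(-4),0,0⟩⟩,
  ⟨![0,1,4,2,3], ⟨0,0,(-4),(-4),0,0,0,4,0⟩⟩,
  ⟨![0,2,1,4,3], ⟨(-4),0,0,0,(-4),0,0,0,4⟩⟩,
  ⟨![0,2,3,1,4], ⟨0,0,4,4,0,0,0,4,0⟩⟩,
  ⟨![0,2,4,3,1], ⟨0,4,0,0,0,(-4),(-4),0,0⟩⟩,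
  ⟨![0,3,1,2,4], ⟨0,4,0,0,0,4,4,0,0⟩⟩,
  ⟨![0,3,2,4,1], ⟨0,0,4,(-4),0,0,0,(-4),0⟩⟩,
  ⟨![0,3,4,1,2], ⟨(-4),0,0,0,4,0,0,0,(-4)⟩⟩,
  ⟨![0,4,1,3,2], ⟨0,0,(-4),4,0,0,0,(-4),0⟩⟩,
  ⟨![0,4,2,1,3], ⟨0,(-4),0,0,0,(-4),4,0,0⟩⟩,
  ⟨![0,4,3,2,1], ⟨4,0,0,0,(-4),0,0,0,(-4)⟩⟩,
  ⟨![1,0,2,4,3], ⟨⟨-1,1⟩,2,⟨1,1⟩,2,⟨-1,-1⟩,⟨-1,1⟩,⟨1,1⟩,⟨-1,1⟩,(-2)⟩⟩,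
  ⟨![1,0,3,2,4], ⟨(-2),⟨1,1⟩,⟨1,-1⟩,⟨1,1⟩,⟨-1,1⟩,(-2),⟨1,-1⟩,(-2),⟨-1,-1⟩⟩⟩,
  ⟨![1,0,4,3,2], ⟨⟨-1,-1⟩,⟨1,-1⟩,2,⟨1,-1⟩,(-2),⟨-1,-1⟩,2,⟨-1,-1⟩,⟨-1,1⟩⟩⟩,
  ⟨![1,2,0,3,4], ⟨⟨1,-1⟩,(-2),⟨1,1⟩,(-2),⟨1,1⟩,⟨-1,1⟩,⟨-1,-1⟩,⟨1,-1⟩,(-2)⟩⟩,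
  ⟨![1,2,3,4,0], ⟨⟨-1,-1⟩,⟨-1,1⟩,(-2),⟨1,-1⟩,2,⟨1,1⟩,2,⟨1,1⟩,⟨1,-1⟩⟩⟩,
  ⟨![1,2,4,0,3], ⟨2,⟨1,1⟩,⟨-1,1⟩,⟨-1,-1⟩,⟨-1,1⟩,2,⟨-1,1⟩,(-2),⟨1,1⟩⟩⟩,
  ⟨![1,3,0,4,2], ⟨2,⟨-1,-1⟩,⟨1,-1⟩,⟨-1,-1⟩,⟨1,-1⟩,(-2),⟨-1,1⟩,2,⟨-1,-1⟩⟩⟩,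
  ⟨![1,3,2,0,4], ⟨⟨1,1⟩,⟨1,-1⟩,(-2),⟨-1,1⟩,(-2),⟨1,1⟩,(-2),⟨-1,-1⟩,⟨1,-1⟩⟩⟩,
  ⟨![1,3,4,2,0], ⟨⟨-1,1⟩,(-2),⟨-1,-1⟩,2,⟨1,1⟩,⟨1,-1⟩,⟨1,1⟩,⟨1,-1⟩,2⟩⟩,
  ⟨![1,4,0,2,3], ⟨⟨1,1⟩,⟨-1,1⟩,2,⟨-1,1⟩,2,⟨-1,-1⟩,(-2),⟨1,1⟩,⟨-1,1⟩⟩⟩,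
  ⟨![1,4,2,3,0], ⟨(-2),⟨-1,-1⟩,⟨-1,1⟩,⟨1,1⟩,⟨1,-1⟩,2,⟨1,-1⟩,2,⟨1,1⟩⟩⟩,
  ⟨![1,4,3,0,2], ⟨⟨1,-1⟩,2,⟨-1,-1⟩,(-2),⟨-1,-1⟩,⟨1,-1⟩,⟨-1,-1⟩,⟨-1,1⟩,2⟩⟩,
  ⟨![2,0,1,3,4], ⟨⟨1,-1⟩,(-2),⟨-1,-1⟩,(-2),⟨1,1⟩,⟨1,-1⟩,⟨1,1⟩,⟨-1,1⟩,(-2)⟩⟩,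
  ⟨![2,0,3,4,1], ⟨⟨1,1⟩,⟨-1,1⟩,(-2),⟨-1,1⟩,2,⟨1,1⟩,2,⟨-1,-1⟩,⟨-1,1⟩⟩⟩,
  ⟨![2,0,4,1,3], ⟨2,⟨-1,-1⟩,⟨-1,1⟩,⟨-1,-1⟩,⟨1,-1⟩,2,⟨1,-1⟩,(-2),⟨-1,-1⟩⟩⟩,
  ⟨![2,1,0,4,3], ⟨⟨-1,1⟩,2,⟨-1,-1⟩,2,⟨-1,-1⟩,⟨1,-1⟩,⟨-1,-1⟩,⟨1,-1⟩,(-2)⟩⟩,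
  ⟨![2,1,3,0,4], ⟨(-2),⟨-1,-1⟩,⟨1,-1⟩,⟨1,1⟩,⟨1,-1⟩,(-2),⟨-1,1⟩,(-2),⟨1,1⟩⟩⟩,
  ⟨![2,1,4,3,0], ⟨⟨1,1⟩,⟨1,-1⟩,2,⟨-1,1⟩,(-2),⟨-1,-1⟩,2,⟨1,1⟩,⟨1,-1⟩⟩⟩,
  ⟨![2,3,0,1,4], ⟨⟨-1,-1⟩,⟨1,-1⟩,(-2),⟨1,-1⟩,(-2),⟨1,1⟩,(-2),⟨1,1⟩,⟨-1,1⟩⟩⟩,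
  ⟨![2,3,1,4,0], ⟨2,⟨1,1⟩,⟨1,-1⟩,⟨-1,-1⟩,⟨-1,1⟩,(-2),⟨1,-1⟩,2,⟨1,1⟩⟩⟩,
  ⟨![2,3,4,0,1], ⟨⟨-1,1⟩,(-2),⟨1,1⟩,2,⟨1,1⟩,⟨-1,1⟩,⟨-1,-1⟩,⟨-1,1⟩,2⟩⟩,
  ⟨![2,4,0,3,1], ⟨(-2),⟨1,1⟩,⟨-1,1⟩,⟨1,1⟩,⟨-1,1⟩,2,⟨-1,1⟩,2,⟨-1,-1⟩⟩⟩,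
  ⟨![2,4,1,0,3], ⟨⟨-1,-1⟩,⟨-1,1⟩,2,⟨1,-1⟩,2,⟨-1,-1⟩,(-2),⟨-1,-1⟩,⟨1,-1⟩⟩⟩,
  ⟨![2,4,3,1,0], ⟨⟨1,-1⟩,2,⟨1,1⟩,(-2),⟨-1,-1⟩,⟨-1,1⟩,⟨1,1⟩,⟨1,-1⟩,2⟩⟩,
  ⟨![3,0,1,4,2], ⟨2,⟨-1,-1⟩,⟨-1,1⟩,⟨1,1⟩,⟨-1,1⟩,(-2),⟨-1,1⟩,2,⟨1,1⟩⟩⟩,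
  ⟨![3,0,2,1,4], ⟨⟨1,1⟩,⟨-1,1⟩,(-2),⟨1,-1⟩,(-2),⟨-1,-1⟩,(-2),⟨1,1⟩,⟨1,-1⟩⟩⟩,
  ⟨![3,0,4,2,1], ⟨⟨1,-1⟩,(-2),⟨-1,-1⟩,2,⟨-1,-1⟩,⟨-1,1⟩,⟨-1,-1⟩,⟨1,-1⟩,2⟩⟩,
  ⟨![3,1,0,2,4], ⟨(-2),⟨1,1⟩,⟨-1,1⟩,⟨-1,-1⟩,⟨1,-1⟩,(-2),⟨1,-1⟩,(-2),⟨1,1⟩⟩⟩,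
  ⟨![3,1,2,4,0], ⟨⟨1,-1⟩,2,⟨1,1⟩,2,⟨1,1⟩,⟨1,-1⟩,⟨-1,-1⟩,⟨-1,1⟩,(-2)⟩⟩,
  ⟨![3,1,4,0,2], ⟨⟨-1,-1⟩,⟨-1,1⟩,2,⟨-1,1⟩,(-2),⟨1,1⟩,2,⟨1,1⟩,⟨-1,1⟩⟩⟩,
  ⟨![3,2,0,4,1], ⟨⟨-1,-1⟩,⟨1,-1⟩,(-2),⟨-1,1⟩,2,⟨-1,-1⟩,2,⟨-1,-1⟩,⟨1,-1⟩⟩⟩,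
  ⟨![3,2,1,0,4], ⟨⟨-1,1⟩,(-2),⟨1,1⟩,(-2),⟨-1,-1⟩,⟨1,-1⟩,⟨1,1⟩,⟨1,-1⟩,(-2)⟩⟩,
  ⟨![3,2,4,1,0], ⟨2,⟨1,1⟩,⟨1,-1⟩,⟨1,1⟩,⟨1,-1⟩,2,⟨-1,1⟩,(-2),⟨-1,-1⟩⟩⟩,
  ⟨![3,4,0,1,2], ⟨⟨-1,1⟩,2,⟨-1,-1⟩,(-2),⟨1,1⟩,⟨-1,1⟩,⟨1,1⟩,⟨-1,1⟩,2⟩⟩,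
  ⟨![3,4,1,2,0], ⟨⟨1,1⟩,⟨1,-1⟩,2,⟨1,-1⟩,2,⟨1,1⟩,(-2),⟨-1,-1⟩,⟨-1,1⟩⟩⟩,
  ⟨![3,4,2,0,1], ⟨(-2),⟨-1,-1⟩,⟨1,-1⟩,⟨-1,-1⟩,⟨-1,1⟩,2,⟨1,-1⟩,2,⟨-1,-1⟩⟩⟩,
  ⟨![4,0,1,2,3], ⟨⟨-1,-1⟩,⟨1,-1⟩,2,⟨-1,1⟩,2,⟨1,1⟩,(-2),⟨1,1⟩,⟨1,-1⟩⟩⟩,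
  ⟨![4,0,2,3,1], ⟨(-2),⟨1,1⟩,⟨1,-1⟩,⟨-1,-1⟩,⟨1,-1⟩,2,⟨-1,1⟩,2,⟨1,1⟩⟩⟩,
  ⟨![4,0,3,1,2], ⟨⟨-1,1⟩,2,⟨1,1⟩,(-2),⟨1,1⟩,⟨1,-1⟩,⟨-1,-1⟩,⟨1,-1⟩,2⟩⟩,
  ⟨![4,1,0,3,2], ⟨⟨1,1⟩,⟨-1,1⟩,2,⟨1,-1⟩,(-2),⟨1,1⟩,2,⟨-1,-1⟩,⟨1,-1⟩⟩⟩,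
  ⟨![4,1,2,0,3], ⟨⟨1,-1⟩,2,⟨-1,-1⟩,2,⟨1,1⟩,⟨-1,1⟩,⟨1,1⟩,⟨1,-1⟩,(-2)⟩⟩,
  ⟨![4,1,3,2,0], ⟨(-2),⟨-1,-1⟩,⟨-1,1⟩,⟨-1,-1⟩,⟨-1,1⟩,(-2),⟨-1,1⟩,(-2),⟨-1,-1⟩⟩⟩,
  ⟨![4,2,0,1,3], ⟨2,⟨-1,-1⟩,⟨1,-1⟩,⟨1,1⟩,⟨-1,1⟩,2,⟨1,-1⟩,(-2),⟨1,1⟩⟩⟩,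
  ⟨![4,2,1,3,0], ⟨⟨-1,1⟩,(-2),⟨-1,-1⟩,(-2),⟨-1,-1⟩,⟨-1,1⟩,⟨-1,-1⟩,⟨-1,1⟩,(-2)⟩⟩,
  ⟨![4,2,3,0,1], ⟨⟨1,1⟩,⟨1,-1⟩,(-2),⟨1,-1⟩,2,⟨-1,-1⟩,2,⟨1,1⟩,⟨-1,1⟩⟩⟩,
  ⟨![4,3,0,2,1], ⟨⟨1,-1⟩,(-2),⟨1,1⟩,2,⟨-1,-1⟩,⟨1,-1⟩,⟨1,1⟩,⟨-1,1⟩,2⟩⟩,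
  ⟨![4,3,1,0,2], ⟨2,⟨1,1⟩,⟨-1,1⟩,⟨1,1⟩,⟨1,-1⟩,(-2),⟨1,-1⟩,2,⟨-1,-1⟩⟩⟩,
  ⟨![4,3,2,1,0], ⟨⟨-1,-1⟩,⟨-1,1⟩,(-2),⟨-1,1⟩,(-2),⟨-1,-1⟩,(-2),⟨-1,-1⟩,⟨-1,1⟩⟩⟩]


def mr0 : List Nat := [0,1,2,3,4,5,6,7,8,9,10,11,12,13,14,15,16,17,18,19,20,21,22,23,24,25,26,27,28,29,30,31,32,33,34,35,36,37,38,39,40,41,42,43,44,45,46,47,48,49,50,51,52,53,54,55,56,57,58,59]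
def mr1 : List Nat := [1,2,0,6,8,7,9,11,10,3,4,5,13,14,12,18,20,19,21,23,22,15,16,17,36,38,37,39,41,40,45,46,47,42,43,44,48,50,49,51,53,52,57,58,59,54,55,56,24,25,26,27,28,29,30,31,32,33,34,35]
def mr2 : List Nat := [2,0,1,9,10,11,3,5,4,6,8,7,14,12,13,21,22,23,15,17,16,18,20,19,48,49,50,51,52,53,54,55,56,57,58,59,24,26,25,27,29,28,33,34,35,30,31,32,36,38,37,39,41,40,45,46,47,42,43,44]
def mr3 : List Nat := [3,5,4,0,2,1,10,9,11,7,6,8,24,26,25,27,29,28,33,34,35,30,31,32,12,14,13,15,17,16,21,22,23,18,19,20,49,48,50,54,55,56,51,52,53,57,59,58,37,36,38,42,43,44,39,40,41,45,47,46]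
def mr4 : List Nat := [4,3,5,7,6,8,0,1,2,10,11,9,25,24,26,30,31,32,27,28,29,33,35,34,37,36,38,42,43,44,39,40,41,45,47,46,12,13,14,15,16,17,18,19,20,21,22,23,49,50,48,54,56,55,57,59,58,51,52,53]
def mr5 : List Nat := [5,4,3,10,11,9,7,8,6,0,2,1,26,25,24,33,35,34,30,32,31,27,29,28,49,50,48,54,56,55,57,59,58,51,52,53,37,38,36,42,44,43,45,47,46,39,40,41,12,14,13,15,17,16,21,22,23,18,19,20]
def mr6 : List Nat := [6,7,8,1,0,2,4,3,5,11,9,10,36,37,38,39,40,41,42,43,44,45,46,47,13,12,14,18,19,20,15,16,17,21,23,22,25,24,26,30,31,32,27,28,29,33,35,34,50,48,49,57,58,59,51,53,52,54,56,55]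
def mr7 : List Nat := [7,8,6,4,5,3,11,10,9,1,0,2,37,38,36,42,44,43,45,47,46,39,40,41,25,26,24,30,32,31,33,35,34,27,28,29,50,49,48,57,59,58,54,56,55,51,53,52,13,12,14,18,19,20,15,16,17,21,23,22]
def mr8 : List Nat := [8,6,7,11,9,10,1,2,0,4,5,3,38,36,37,45,46,47,39,41,40,42,44,43,50,48,49,57,58,59,51,53,52,54,56,55,13,14,12,18,20,19,21,23,22,15,16,17,25,26,24,30,32,31,33,35,34,27,28,29]
def mr9 : List Nat := [9,11,10,2,1,0,8,6,7,5,3,4,48,50,49,51,53,52,57,58,59,54,55,56,14,13,12,21,23,22,18,20,19,15,17,16,38,36,37,45,46,47,39,41,40,42,44,43,26,24,25,33,34,35,27,29,28,30,32,31]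
def mr10 : List Nat := [10,9,11,5,3,4,2,0,1,8,7,6,49,48,50,54,55,56,51,52,53,57,59,58,26,24,25,33,34,35,27,29,28,30,32,31,14,12,13,21,22,23,15,17,16,18,20,19,38,37,36,45,47,46,42,44,43,39,41,40]
def mr11 : List Nat := [11,10,9,8,7,6,5,4,3,2,1,0,50,49,48,57,59,58,54,56,55,51,53,52,38,37,36,45,47,46,42,44,43,39,41,40,26,25,24,33,35,34,30,32,31,27,29,28,14,13,12,21,23,22,18,20,19,15,17,16]
def mr12 : List Nat := [12,14,13,15,17,16,21,22,23,18,19,20,0,2,1,3,5,4,9,10,11,6,7,8,27,29,28,24,26,25,34,33,35,31,30,32,51,52,53,48,49,50,55,54,56,58,57,59,39,40,41,36,37,38,43,42,44,46,45,47]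
def mr13 : List Nat := [13,12,14,18,19,20,15,16,17,21,23,22,1,0,2,6,7,8,3,4,5,9,11,10,39,40,41,36,37,38,43,42,44,46,45,47,27,28,29,24,25,26,31,30,32,34,33,35,51,53,52,48,50,49,58,57,59,55,54,56]
def mr14 : List Nat := [14,13,12,21,23,22,18,20,19,15,17,16,2,1,0,9,11,10,6,8,7,3,5,4,51,53,52,48,50,49,58,57,59,55,54,56,39,41,40,36,38,37,46,45,47,43,42,44,27,29,28,24,26,25,34,33,35,31,30,32]
def mr15 : List Nat := [15,16,17,12,13,14,19,18,20,22,21,23,27,28,29,24,25,26,31,30,32,34,33,35,0,1,2,3,4,5,6,7,8,9,10,11,40,39,41,43,42,44,36,37,38,46,47,45,52,51,53,55,54,56,48,49,50,58,59,57]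
def mr16 : List Nat := [16,17,15,19,20,18,22,23,21,12,13,14,28,29,27,31,32,30,34,35,33,24,25,26,40,41,39,43,44,42,46,47,45,36,37,38,52,53,51,55,56,54,58,59,57,48,49,50,0,1,2,3,4,5,6,7,8,9,10,11]
def mr17 : List Nat := [17,15,16,22,21,23,12,14,13,19,20,18,29,27,28,34,33,35,24,26,25,31,32,30,52,51,53,55,54,56,48,49,50,58,59,57,0,2,1,3,5,4,9,10,11,6,7,8,40,41,39,43,44,42,46,47,45,36,37,38]
def mr18 : List Nat := [18,20,19,13,14,12,23,21,22,16,15,17,39,41,40,36,38,37,46,45,47,43,42,44,1,2,0,6,8,7,9,11,10,3,4,5,53,51,52,58,57,59,48,50,49,55,56,54,28,27,29,31,30,32,24,25,26,34,35,33]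
def mr19 : List Nat := [19,18,20,16,15,17,13,12,14,23,22,21,40,39,41,43,42,44,36,37,38,46,47,45,28,27,29,31,30,32,24,25,26,34,35,33,1,0,2,6,7,8,3,4,5,9,11,10,53,52,51,58,59,57,55,56,54,48,50,49]
def mr20 : List Nat := [20,19,18,23,22,21,16,17,15,13,14,12,41,40,39,46,47,45,43,44,42,36,38,37,53,52,51,58,59,57,55,56,54,48,50,49,28,29,27,31,32,30,34,35,33,24,25,26,1,2,0,6,8,7,9,11,10,3,4,5]
def mr21 : List Nat := [21,22,23,14,12,13,17,15,16,20,18,19,51,52,53,48,49,50,55,54,56,58,57,59,2,0,1,9,10,11,3,5,4,6,8,7,29,27,28,34,33,35,24,26,25,31,32,30,41,39,40,46,45,47,36,38,37,43,44,42]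
def mr22 : List Nat := [22,23,21,17,16,15,20,19,18,14,12,13,52,53,51,55,56,54,58,59,57,48,49,50,29,28,27,34,35,33,31,32,30,24,26,25,41,40,39,46,47,45,43,44,42,36,38,37,2,0,1,9,10,11,3,5,4,6,8,7]
def mr23 : List Nat := [23,21,22,20,18,19,14,13,12,17,16,15,53,51,52,58,57,59,48,50,49,55,56,54,41,39,40,46,45,47,36,38,37,43,44,42,2,1,0,9,11,10,6,8,7,3,5,4,29,28,27,34,35,33,31,32,30,24,26,25]
def mr24 : List Nat := [24,25,26,27,28,29,30,31,32,33,34,35,3,4,5,0,1,2,7,6,8,10,9,11,15,16,17,12,13,14,19,18,20,22,21,23,42,43,44,37,36,38,40,39,41,47,45,46,54,55,56,49,48,50,52,51,53,59,57,58]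
def mr25 : List Nat := [25,26,24,30,32,31,33,35,34,27,28,29,4,5,3,7,8,6,10,11,9,0,1,2,42,44,43,37,38,36,47,45,46,40,39,41,54,56,55,49,50,48,59,57,58,52,51,53,15,16,17,12,13,14,19,18,20,22,21,23]
def mr26 : List Nat := [26,24,25,33,34,35,27,29,28,30,32,31,5,3,4,10,9,11,0,2,1,7,8,6,54,55,56,49,48,50,52,51,53,59,57,58,15,17,16,12,14,13,22,21,23,19,18,20,42,44,43,37,38,36,47,45,46,40,39,41]
def mr27 : List Nat := [27,29,28,24,26,25,34,33,35,31,30,32,15,17,16,12,14,13,22,21,23,19,18,20,3,5,4,0,2,1,10,9,11,7,6,8,55,54,56,52,51,53,49,48,50,59,58,57,43,42,44,40,39,41,37,36,38,47,46,45]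
def mr28 : List Nat := [28,27,29,31,30,32,24,25,26,34,35,33,16,15,17,19,18,20,12,13,14,22,23,21,43,42,44,40,39,41,37,36,38,47,46,45,3,4,5,0,1,2,7,6,8,10,9,11,55,56,54,52,53,51,59,58,57,49,48,50]
def mr29 : List Nat := [29,28,27,34,35,33,31,32,30,24,26,25,17,16,15,22,23,21,19,20,18,12,14,13,55,56,54,52,53,51,59,58,57,49,48,50,43,44,42,40,41,39,47,46,45,37,36,38,3,5,4,0,2,1,10,9,11,7,6,8]
def mr30 : List Nat := [30,31,32,25,24,26,28,27,29,35,33,34,42,43,44,37,36,38,40,39,41,47,45,46,4,3,5,7,6,8,0,1,2,10,11,9,16,15,17,19,18,20,12,13,14,22,23,21,56,54,55,59,57,58,49,50,48,52,53,51]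
def mr31 : List Nat := [31,32,30,28,29,27,35,34,33,25,24,26,43,44,42,40,41,39,47,46,45,37,36,38,16,17,15,19,20,18,22,23,21,12,13,14,56,55,54,59,58,57,52,53,51,49,50,48,4,3,5,7,6,8,0,1,2,10,11,9]
def mr32 : List Nat := [32,30,31,35,33,34,25,26,24,28,29,27,44,42,43,47,45,46,37,38,36,40,41,39,56,54,55,59,57,58,49,50,48,52,53,51,4,5,3,7,8,6,10,11,9,0,1,2,16,17,15,19,20,18,22,23,21,12,13,14]
def mr33 : List Nat := [33,35,34,26,25,24,32,30,31,29,27,28,54,56,55,49,50,48,59,57,58,52,51,53,5,4,3,10,11,9,7,8,6,0,2,1,44,42,43,47,45,46,37,38,36,40,41,39,17,15,16,22,21,23,12,14,13,19,20,18]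
def mr34 : List Nat := [34,33,35,29,27,28,26,24,25,32,31,30,55,54,56,52,51,53,49,48,50,59,58,57,17,15,16,22,21,23,12,14,13,19,20,18,5,3,4,10,9,11,0,2,1,7,8,6,44,43,42,47,46,45,40,41,39,37,38,36]
def mr35 : List Nat := [35,34,33,32,31,30,29,28,27,26,25,24,56,55,54,59,58,57,52,53,51,49,50,48,44,43,42,47,46,45,40,41,39,37,38,36,17,16,15,22,23,21,19,20,18,12,14,13,5,4,3,10,11,9,7,8,6,0,2,1]
def mr36 : List Nat := [36,38,37,39,41,40,45,46,47,42,43,44,6,8,7,1,2,0,11,9,10,4,3,5,18,20,19,13,14,12,23,21,22,16,15,17,57,58,59,50,48,49,53,51,52,56,54,55,30,31,32,25,24,26,28,27,29,35,33,34]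
def mr37 : List Nat := [37,36,38,42,43,44,39,40,41,45,47,46,7,6,8,4,3,5,1,0,2,11,10,9,30,31,32,25,24,26,28,27,29,35,33,34,18,19,20,13,12,14,16,15,17,23,21,22,57,59,58,50,49,48,56,54,55,53,51,52]
def mr38 : List Nat := [38,37,36,45,47,46,42,44,43,39,41,40,8,7,6,11,10,9,4,5,3,1,2,0,57,59,58,50,49,48,56,54,55,53,51,52,30,32,31,25,26,24,35,33,34,28,27,29,18,20,19,13,14,12,23,21,22,16,15,17]
def mr39 : List Nat := [39,40,41,36,37,38,43,42,44,46,45,47,18,19,20,13,12,14,16,15,17,23,21,22,6,7,8,1,0,2,4,3,5,11,9,10,31,30,32,28,27,29,25,24,26,35,34,33,58,57,59,53,51,52,50,48,49,56,55,54]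
def mr40 : List Nat := [40,41,39,43,44,42,46,47,45,36,37,38,19,20,18,16,17,15,23,22,21,13,12,14,31,32,30,28,29,27,35,34,33,25,24,26,58,59,57,53,52,51,56,55,54,50,48,49,6,7,8,1,0,2,4,3,5,11,9,10]
def mr41 : List Nat := [41,39,40,46,45,47,36,38,37,43,44,42,20,18,19,23,21,22,13,14,12,16,17,15,58,57,59,53,51,52,50,48,49,56,55,54,6,8,7,1,2,0,11,9,10,4,3,5,31,32,30,28,29,27,35,34,33,25,24,26]
def mr42 : List Nat := [42,44,43,37,38,36,47,45,46,40,39,41,30,32,31,25,26,24,35,33,34,28,27,29,7,8,6,4,5,3,11,10,9,1,0,2,59,57,58,56,54,55,50,49,48,53,52,51,19,18,20,16,15,17,13,12,14,23,22,21]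
def mr43 : List Nat := [43,42,44,40,39,41,37,36,38,47,46,45,31,30,32,28,27,29,25,24,26,35,34,33,19,18,20,16,15,17,13,12,14,23,22,21,7,6,8,4,3,5,1,0,2,11,10,9,59,58,57,56,55,54,53,52,51,50,49,48]
def mr44 : List Nat := [44,43,42,47,46,45,40,41,39,37,38,36,32,31,30,35,34,33,28,29,27,25,26,24,59,58,57,56,55,54,53,52,51,50,49,48,19,20,18,16,17,15,23,22,21,13,12,14,7,8,6,4,5,3,11,10,9,1,0,2]
def mr45 : List Nat := [45,46,47,38,36,37,41,39,40,44,42,43,57,58,59,50,48,49,53,51,52,56,54,55,8,6,7,11,9,10,1,2,0,4,5,3,20,18,19,23,21,22,13,14,12,16,17,15,32,30,31,35,33,34,25,26,24,28,29,27]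
def mr46 : List Nat := [46,47,45,41,40,39,44,43,42,38,36,37,58,59,57,53,52,51,56,55,54,50,48,49,20,19,18,23,22,21,16,17,15,13,14,12,32,31,30,35,34,33,28,29,27,25,26,24,8,6,7,11,9,10,1,2,0,4,5,3]
def mr47 : List Nat := [47,45,46,44,42,43,38,37,36,41,40,39,59,57,58,56,54,55,50,49,48,53,52,51,32,30,31,35,33,34,25,26,24,28,29,27,8,7,6,11,10,9,4,5,3,1,2,0,20,19,18,23,22,21,16,17,15,13,14,12]
def mr48 : List Nat := [48,49,50,51,52,53,54,55,56,57,58,59,9,10,11,2,0,1,5,3,4,8,6,7,21,22,23,14,12,13,17,15,16,20,18,19,33,34,35,26,24,25,29,27,28,32,30,31,45,46,47,38,36,37,41,39,40,44,42,43]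
def mr49 : List Nat := [49,50,48,54,56,55,57,59,58,51,52,53,10,11,9,5,4,3,8,7,6,2,0,1,33,35,34,26,25,24,32,30,31,29,27,28,45,47,46,38,37,36,44,42,43,41,39,40,21,22,23,14,12,13,17,15,16,20,18,19]
def mr50 : List Nat := [50,48,49,57,58,59,51,53,52,54,56,55,11,9,10,8,6,7,2,1,0,5,4,3,45,46,47,38,36,37,41,39,40,44,42,43,21,23,22,14,13,12,20,18,19,17,15,16,33,35,34,26,25,24,32,30,31,29,27,28]
def mr51 : List Nat := [51,53,52,48,50,49,58,57,59,55,54,56,21,23,22,14,13,12,20,18,19,17,15,16,9,11,10,2,1,0,8,6,7,5,3,4,46,45,47,41,39,40,38,36,37,44,43,42,34,33,35,29,27,28,26,24,25,32,31,30]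
def mr52 : List Nat := [52,51,53,55,54,56,48,49,50,58,59,57,22,21,23,17,15,16,14,12,13,20,19,18,34,33,35,29,27,28,26,24,25,32,31,30,9,10,11,2,0,1,5,3,4,8,6,7,46,47,45,41,40,39,44,43,42,38,36,37]
def mr53 : List Nat := [53,52,51,58,59,57,55,56,54,48,50,49,23,22,21,20,19,18,17,16,15,14,13,12,46,47,45,41,40,39,44,43,42,38,36,37,34,35,33,29,28,27,32,31,30,26,24,25,9,11,10,2,1,0,8,6,7,5,3,4]
def mr54 : List Nat := [54,55,56,49,48,50,52,51,53,59,57,58,33,34,35,26,24,25,29,27,28,32,30,31,10,9,11,5,3,4,2,0,1,8,7,6,22,21,23,17,15,16,14,12,13,20,19,18,47,45,46,44,42,43,38,37,36,41,40,39]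
def mr55 : List Nat := [55,56,54,52,53,51,59,58,57,49,48,50,34,35,33,29,28,27,32,31,30,26,24,25,22,23,21,17,16,15,20,19,18,14,12,13,47,46,45,44,43,42,41,40,39,38,37,36,10,9,11,5,3,4,2,0,1,8,7,6]
def mr56 : List Nat := [56,54,55,59,57,58,49,50,48,52,53,51,35,33,34,32,30,31,26,25,24,29,28,27,47,45,46,44,42,43,38,37,36,41,40,39,10,11,9,5,4,3,8,7,6,2,0,1,22,23,21,17,16,15,20,19,18,14,12,13]
def mr57 : List Nat := [57,59,58,50,49,48,56,54,55,53,51,52,45,47,46,38,37,36,44,42,43,41,39,40,11,10,9,8,7,6,5,4,3,2,1,0,35,33,34,32,30,31,26,25,24,29,28,27,23,21,22,20,18,19,14,13,12,17,16,15]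
def mr58 : List Nat := [58,57,59,53,51,52,50,48,49,56,55,54,46,45,47,41,39,40,38,36,37,44,43,42,23,21,22,20,18,19,14,13,12,17,16,15,11,9,10,8,6,7,2,1,0,5,4,3,35,34,33,32,31,30,29,28,27,26,25,24]
def mr59 : List Nat := [59,58,57,56,55,54,53,52,51,50,49,48,47,46,45,44,43,42,41,40,39,38,37,36,35,34,33,32,31,30,29,28,27,26,25,24,23,22,21,20,19,18,17,16,15,14,13,12,11,10,9,8,7,6,5,4,3,2,1,0]

def mtab : List (List Nat) := [mr0,mr1,mr2,mr3,mr4,mr5,mr6,mr7,mr8,mr9,mr10,mr11,mr12,mr13,mr14,mr15,mr16,mr17,mr18,mr19,mr20,mr21,mr22,mr23,mr24,mr25,mr26,mr27,mr28,mr29,mr30,mr31,mr32,mr33,mr34,mr35,mr36,mr37,mr38,mr39,mr40,mr41,mr42,mr43,mr44,mr45,mr46,mr47,mr48,mr49,mr50,mr51,mr52,mr53,mr54,mr55,mr56,mr57,mr58,mr59]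

def dummy : (Fin 5 → Fin 5) × Raw := ⟨id, raw16⟩

/-- The `n`-th table entry: an even permutation (as a function) and its raw matrix. -/
def entry (n : Nat) : (Fin 5 → Fin 5) × Raw := tbl.getD n dummy

/-- Index of the product of the `m`-th and `n`-th group elements. -/
def mulIdx (m n : Nat) : Nat := (mtab.getD m []).getD n 0

/-- The multiplicativity check for a pair of indices. -/
def check (m n : Nat) : Bool :=
  decide ((entry m).2.mul (entry n).2 = (entry (mulIdx m n)).2.four) &&
  decide ((entry m).1 ∘ (entry n).1 = (entry (mulIdx m n)).1) && decide (mulIdx m n < 60)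

def rowOK (m : Nat) : Bool := (List.range 60).all (fun n => check m n)

set_option maxRecDepth 100000 in
set_option maxHeartbeats 4000000 in
lemma rows0 : ∀ i : Fin 10, rowOK (i.val + 0) = true := by decide

set_option maxRecDepth 100000 in
set_option maxHeartbeats 4000000 in
lemma rows1 : ∀ i : Fin 10, rowOK (i.val + 10) = true := by decide

set_option maxRecDepth 100000 in
set_option maxHeartbeats 4000000 in
lemma rows2 : ∀ i : Fin 10, rowOK (i.val + 20) = true := by decide

set_option maxRecDepth 100000 in
set_option maxHeartbeats 4000000 in
lemma rows3 : ∀ i : Fin 10, rowOK (i.val + 30) = true := by decide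

set_option maxRecDepth 100000 in
set_option maxHeartbeats 4000000 in
lemma rows4 : ∀ i : Fin 10, rowOK (i.val + 40) = true := by decide

set_option maxRecDepth 100000 in
set_option maxHeartbeats 4000000 in
lemma rows5 : ∀ i : Fin 10, rowOK (i.val + 50) = true := by decide


lemma rowOK_of_lt {m : Nat} (hm : m < 60) : rowOK m = true := by
  obtain ⟨k, r, hr, hk, rfl⟩ : ∃ k r, r < 10 ∧ k < 6 ∧ m = r + 10 * k :=
    ⟨m / 10, m % 10, Nat.mod_lt _ (by norm_num), by omega, by omega⟩
  interval_cases k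
  · exact rows0 ⟨r, hr⟩
  · exact rows1 ⟨r, hr⟩
  · exact rows2 ⟨r, hr⟩
  · exact rows3 ⟨r, hr⟩
  · exact rows4 ⟨r, hr⟩
  · exact rows5 ⟨r, hr⟩

lemma check_of_lt {m n : Nat} (hm : m < 60) (hn : n < 60) : check m n = true := by
  have h := rowOK_of_lt hm
  rw [rowOK, List.all_eq_true] at h
  exact h n (List.mem_range.mpr hn)

lemma check_mul {m n : Nat} (hm : m < 60) (hn : n < 60) :
    (entry m).2.mul (entry n).2 = (entry (mulIdx m n)).2.four ∧
    (entry m).1 ∘ (entry n).1 = (entry (mulIdx m n)).1 ∧ mulIdx m n < 60 := by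
  have h := check_of_lt hm hn
  rw [check, Bool.and_eq_true, Bool.and_eq_true] at h
  exact ⟨of_decide_eq_true h.1.1, of_decide_eq_true h.1.2, of_decide_eq_true h.2⟩

set_option maxRecDepth 100000 in
set_option maxHeartbeats 1000000 in
lemma raw_orth : ∀ n : Fin 60, (entry n.val).2.mul (entry n.val).2.tr = raw16 := by decide

set_option maxRecDepth 100000 in
set_option maxHeartbeats 4000000 in
lemma key_inj : ∀ m n : Fin 60,
    (entry m.val).1 = (entry n.val).1 → (entry m.val).2 = (entry n.val).2 := by decide

set_option maxRecDepth 100000 in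
set_option maxHeartbeats 4000000 in
lemma even_key : ∀ σ : Equiv.Perm (Fin 5), Equiv.Perm.sign σ = 1 →
    ∃ n : Fin 60, (entry n.val).1 = ⇑σ := by decide

/-- The lookup index of a permutation in the table. -/
def idx (σ : Equiv.Perm (Fin 5)) : Nat :=
  (((List.range 60).find? (fun n => (entry n).1 == ⇑σ)).getD 0)

lemma idx_spec {σ : Equiv.Perm (Fin 5)} (h : Equiv.Perm.sign σ = 1) :
    idx σ < 60 ∧ (entry (idx σ)).1 = ⇑σ := by
  obtain ⟨n, hn⟩ := even_key σ h
  have hsome : (((List.range 60).find? (fun n => (entry n).1 == ⇑σ))).isSome := by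
    rw [List.find?_isSome]
    exact ⟨n.val, List.mem_range.mpr n.isLt, by simpa using hn⟩
  obtain ⟨m, hm⟩ := Option.isSome_iff_exists.mp hsome
  have h1 : m ∈ List.range 60 := List.mem_of_find?_eq_some hm
  have h2 := List.find?_some hm
  rw [idx, hm]
  exact ⟨List.mem_range.mp h1, by simpa using h2⟩

/-! ### Passing to real matrices -/

/-- The embedding `ℤ√5 →+* ℝ`. -/
noncomputable def gR : Z5 →+* ℝ :=
  Zsqrtd.lift ⟨Real.sqrt 5, by
    rw [Real.mul_self_sqrt (by norm_num : (0:ℝ) ≤ 5)]; norm_num⟩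

/-- A raw matrix as a real matrix. -/
noncomputable def toR (x : Raw) : Matrix (Fin 3) (Fin 3) ℝ :=
  !![gR x.a, gR x.b, gR x.c; gR x.d, gR x.e, gR x.f; gR x.g, gR x.h, gR x.i]

lemma toR_mul (x y : Raw) : toR (x.mul y) = toR x * toR y := by
  ext i j
  fin_cases i <;> fin_cases j <;>
    simp [toR, Raw.mul, Matrix.mul_apply, Fin.sum_univ_three, Matrix.vecHead, Matrix.vecTail]

lemma toR_four (x : Raw) : toR x.four = (4:ℝ) • toR x := by
  ext i j
  fin_cases i <;> fin_cases j <;>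
    simp [toR, Raw.four, map_ofNat, Matrix.vecHead, Matrix.vecTail]

lemma toR_tr (x : Raw) : toR x.tr = (toR x).transpose := by
  ext i j
  fin_cases i <;> fin_cases j <;> simp [toR, Raw.tr, Matrix.vecHead, Matrix.vecTail]

lemma toR_raw16 : toR raw16 = (16:ℝ) • (1 : Matrix (Fin 3) (Fin 3) ℝ) := by
  ext i j
  fin_cases i <;> fin_cases j <;>
    simp [toR, raw16, map_ofNat, Matrix.one_apply, Matrix.vecHead, Matrix.vecTail]

/-- The real rotation matrix associated to a permutation. -/
noncomputable def F (σ : Equiv.Perm (Fin 5)) : Matrix (Fin 3) (Fin 3) ℝ :=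
  (4:ℝ)⁻¹ • toR (entry (idx σ)).2

lemma F_mul {σ τ : Equiv.Perm (Fin 5)} (hσ : Equiv.Perm.sign σ = 1)
    (hτ : Equiv.Perm.sign τ = 1) : F (σ * τ) = F σ * F τ := by
  obtain ⟨hm, hkm⟩ := idx_spec hσ
  obtain ⟨hn, hkn⟩ := idx_spec hτ
  obtain ⟨hmul, hcomp, hlt⟩ := check_mul hm hn
  have hστ : Equiv.Perm.sign (σ * τ) = 1 := by rw [map_mul, hσ, hτ, one_mul]
  obtain ⟨hk, hkk⟩ := idx_spec hστ
  have hkey : (entry (idx (σ * τ))).1 = (entry (mulIdx (idx σ) (idx τ))).1 := by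
    rw [hkk, ← hcomp, hkm, hkn]
    rfl
  have hraw : (entry (idx (σ * τ))).2 = (entry (mulIdx (idx σ) (idx τ))).2 :=
    key_inj ⟨_, hk⟩ ⟨_, hlt⟩ hkey
  rw [F, F, F, hraw, smul_mul_assoc, mul_smul_comm, smul_smul, ← toR_mul, hmul, toR_four,
    smul_smul]
  norm_num

lemma F_one : F 1 = 1 := by
  have h1 : Equiv.Perm.sign (1 : Equiv.Perm (Fin 5)) = 1 := by simp
  obtain ⟨hk, hkk⟩ := idx_spec h1
  have h0 : (entry 0).1 = ⇑(1 : Equiv.Perm (Fin 5)) := by decide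
  have hraw : (entry (idx 1)).2 = (entry 0).2 :=
    key_inj ⟨_, hk⟩ ⟨0, by norm_num⟩ (by rw [hkk, h0])
  have he : (entry 0).2 = (⟨4,0,0,0,4,0,0,0,4⟩ : Raw) := by decide
  have ht : toR (⟨4,0,0,0,4,0,0,0,4⟩ : Raw) = (4:ℝ) • 1 := by
    ext i j
    fin_cases i <;> fin_cases j <;> simp [toR, map_ofNat, Matrix.one_apply, Matrix.vecHead, Matrix.vecTail]
  rw [F, hraw, he, ht, smul_smul]
  norm_num

lemma F_orth {σ : Equiv.Perm (Fin 5)} (hσ : Equiv.Perm.sign σ = 1) :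
    F σ * (F σ).transpose = 1 := by
  obtain ⟨hm, -⟩ := idx_spec hσ
  have h := raw_orth ⟨_, hm⟩
  rw [F, Matrix.transpose_smul, ← toR_tr, smul_mul_assoc, mul_smul_comm, smul_smul,
    ← toR_mul, h, toR_raw16, smul_smul]
  norm_num

/-- The homomorphism from `A₅` to the real orthogonal group. -/
noncomputable def phi0 : alternatingGroup (Fin 5) →* Matrix.orthogonalGroup (Fin 3) ℝ where
  toFun σ := ⟨F σ.val, by
    rw [Matrix.mem_orthogonalGroup_iff]
    exact F_orth (Equiv.Perm.mem_alternatingGroup.mp σ.2)⟩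
  map_one' := Subtype.ext F_one
  map_mul' σ τ := Subtype.ext
    (F_mul (Equiv.Perm.mem_alternatingGroup.mp σ.2) (Equiv.Perm.mem_alternatingGroup.mp τ.2))

/-! ### The distinguished element, mapped to `diag (1,-1,-1)` -/

def p0 : Equiv.Perm (Fin 5) := Equiv.swap 1 4 * Equiv.swap 2 3

lemma p0_sign : Equiv.Perm.sign p0 = 1 := by decide

lemma p0_ne_one : p0 ≠ 1 := by decide

def sigma0 : alternatingGroup (Fin 5) :=
  ⟨p0, Equiv.Perm.mem_alternatingGroup.mpr p0_sign⟩

lemma F_p0 : F p0 = !![(1:ℝ),0,0;0,-1,0;0,0,-1] := by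
  obtain ⟨hk, hkk⟩ := idx_spec p0_sign
  have h11 : (entry 11).1 = ⇑p0 := by decide
  have hraw : (entry (idx p0)).2 = (entry 11).2 :=
    key_inj ⟨_, hk⟩ ⟨11, by norm_num⟩ (by rw [hkk, h11])
  have he : (entry 11).2 = (⟨4,0,0,0,-4,0,0,0,-4⟩ : Raw) := by decide
  rw [F, hraw, he]
  ext i j
  fin_cases i <;> fin_cases j <;>
    simp [toR, map_ofNat, Matrix.vecHead, Matrix.vecTail]

lemma det_F_p0 : (F p0).det = 1 := by
  rw [F_p0, Matrix.det_fin_three]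
  simp

lemma F_p0_ne_one : F p0 ≠ 1 := by
  intro h
  have := congrFun (congrFun h 1) 1
  rw [F_p0] at this
  norm_num [Matrix.one_apply] at this

/-! ### Putting it together -/

theorem a5_embeds_in_so3 :
    ∃ φ : alternatingGroup (Fin 5) →* SO3, Function.Injective φ := by
  -- the determinant is identically 1 on the image of `phi0`, by simplicity of `A₅`
  have hdet : ∀ σ : alternatingGroup (Fin 5), phi0 σ ∈ SO3 := by
    have hker := IsSimpleGroup.eq_bot_or_eq_top_of_normal
      (orthogonalDet.comp phi0).ker (MonoidHom.normal_ker _)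
    rcases hker with hbot | htop
    · exfalso
      have hmem : sigma0 ∈ (orthogonalDet.comp phi0).ker := by
        rw [MonoidHom.mem_ker, MonoidHom.comp_apply]
        exact det_F_p0
      rw [hbot, Subgroup.mem_bot] at hmem
      exact p0_ne_one (congrArg Subtype.val hmem)
    · intro σ
      have : σ ∈ (orthogonalDet.comp phi0).ker := by rw [htop]; trivial
      rw [MonoidHom.mem_ker, MonoidHom.comp_apply] at this
      exact MonoidHom.mem_ker.mpr this
  refine ⟨phi0.codRestrict SO3 hdet, ?_⟩
  rw [← MonoidHom.ker_eq_bot_iff]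
  rcases IsSimpleGroup.eq_bot_or_eq_top_of_normal
    (phi0.codRestrict SO3 hdet).ker (MonoidHom.normal_ker _) with hbot | htop
  · exact hbot
  · exfalso
    have hmem : sigma0 ∈ (phi0.codRestrict SO3 hdet).ker := by rw [htop]; trivial
    rw [MonoidHom.mem_ker] at hmem
    have h1 : phi0 sigma0 = 1 := by
      have := congrArg Subtype.val hmem
      simpa [MonoidHom.codRestrict] using this
    have h2 : F p0 = 1 := congrArg Subtype.val h1
    exact F_p0_ne_one h2
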